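/- arXiv:1502.01508 — 2 statements merged into one kernel-verified Lean document; each statement's English description precedes it below -/
import Mathlib

section
/- If R is an Armendariz ring, then for every positive integer n the upper triangular matrix ring T_n(R) is almost Armendariz. -/
/-- An element `a` of a ring `R` is *strongly nilpotent* if every sequence
`a₀ = a`, `aₙ₊₁ ∈ aₙ R aₙ` is eventually zero. -/
def IsStronglyNilpotent {R : Type*} [Ring R] (a : R) : Prop :=
  ∀ s : ℕ → R, s 0 = a → (∀ n : ℕ, ∃ r : R, s (n + 1) = s n * r * s n) → ∃ n : ℕ, s n = 0

/-- The prime radical `P(R)` of a ring `R`: the intersection of all prime two-sided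
ideals of `R`, equivalently the set of strongly nilpotent elements of `R`. -/
def primeRadical (R : Type*) [Ring R] : Set R :=
  {a : R | IsStronglyNilpotent a}

/-- A ring `R` is *almost Armendariz* if whenever `f, g ∈ R[x]` satisfy `f g = 0`, every
product of a coefficient of `f` with a coefficient of `g` lies in the prime radical `P(R)`. -/
def IsAlmostArmendariz (R : Type*) [Ring R] : Prop :=
  ∀ f g : Polynomial R, f * g = 0 → ∀ i j : ℕ, f.coeff i * g.coeff j ∈ primeRadical R

/-- A ring `R` is *Armendariz* if whenever `f, g ∈ R[x]` satisfy `f g = 0`, every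
product of a coefficient of `f` with a coefficient of `g` is zero. -/
def IsArmendariz (R : Type*) [Ring R] : Prop :=
  ∀ f g : Polynomial R, f * g = 0 → ∀ i j : ℕ, f.coeff i * g.coeff j = 0

/-- `T_n(R)`: the ring of `n × n` upper triangular matrices over `R`, as a subring of the
full matrix ring. -/
def upperTriangularSubring (R : Type*) [Ring R] (n : ℕ) :
    Subring (Matrix (Fin n) (Fin n) R) where
  carrier := {M | ∀ i j : Fin n, j < i → M i j = 0}
  zero_mem' := fun _ _ _ => rfl
  one_mem' := fun _ _ h => Matrix.one_apply_ne (ne_of_gt h)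
  add_mem' := fun ha hb i j h => by
    simp only [Matrix.add_apply, ha i j h, hb i j h, add_zero]
  neg_mem' := fun ha i j h => by
    simp only [Matrix.neg_apply, ha i j h, neg_zero]
  mul_mem' := fun {a b} ha hb i j h => by
    rw [Matrix.mul_apply]
    apply Finset.sum_eq_zero
    intro k _
    rcases le_or_gt k j with hk | hk
    · rw [ha i k (lt_of_le_of_lt hk h), zero_mul]
    · rw [hb k j hk, mul_zero]


lemma ut_apply {R : Type*} [Ring R] {n : ℕ} (M : upperTriangularSubring R n)
    {i j : Fin n} (h : j < i) : (M : Matrix (Fin n) (Fin n) R) i j = 0 := M.2 i j h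

/-- The `k`-th diagonal entry, as a ring hom from `T_n(R)` to `R`. -/
def diagHom {R : Type*} [Ring R] (n : ℕ) (k : Fin n) :
    upperTriangularSubring R n →+* R where
  toFun M := (M : Matrix (Fin n) (Fin n) R) k k
  map_one' := Matrix.one_apply_eq k
  map_zero' := rfl
  map_add' := fun M N => rfl
  map_mul' := fun M N => by
    show ((M : Matrix (Fin n) (Fin n) R) * (N : Matrix (Fin n) (Fin n) R)) k k = _
    rw [Matrix.mul_apply, Finset.sum_eq_single k]
    · intro l _ hl
      rcases lt_or_gt_of_ne hl with h | h
      · rw [ut_apply M h, zero_mul]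
      · rw [ut_apply N h, mul_zero]
    · intro h; exact absurd (Finset.mem_univ k) h

lemma stronglyNilpotent_of_diag_zero {R : Type*} [Ring R] {n : ℕ}
    (a : upperTriangularSubring R n)
    (ha : ∀ k : Fin n, (a : Matrix (Fin n) (Fin n) R) k k = 0) :
    IsStronglyNilpotent a := by
  intro s hs0 hstep
  have main : ∀ m : ℕ, ∀ i j : Fin n, (j : ℕ) < (i : ℕ) + (m + 1) →
      (s m : Matrix (Fin n) (Fin n) R) i j = 0 := by
    intro m
    induction m with
    | zero =>
      intro i j hij
      rcases lt_or_eq_of_le (Nat.lt_succ_iff.mp hij) with h | h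
      · exact ut_apply (s 0) (Fin.lt_def.mpr h)
      · have hj : j = i := Fin.ext h
        subst hj
        rw [hs0]; exact ha j
    | succ m ih =>
      intro i j hij
      obtain ⟨r, hr⟩ := hstep m
      have hval : (s (m+1) : Matrix (Fin n) (Fin n) R) =
          (s m : Matrix (Fin n) (Fin n) R) * (r : Matrix (Fin n) (Fin n) R) *
          (s m : Matrix (Fin n) (Fin n) R) := by
        rw [hr]; rfl
      rw [hval, Matrix.mul_apply]
      apply Finset.sum_eq_zero
      intro l _
      rcases lt_or_ge (l : ℕ) ((i : ℕ) + (m + 1)) with hl | hl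
      · have h1 : ((s m : Matrix (Fin n) (Fin n) R) * (r : Matrix (Fin n) (Fin n) R)) i l = 0 := by
          rw [Matrix.mul_apply]
          apply Finset.sum_eq_zero
          intro kk _
          rcases lt_or_ge (kk : ℕ) ((i : ℕ) + (m + 1)) with hk | hk
          · rw [ih i kk hk, zero_mul]
          · have hlk : (l : ℕ) < (kk : ℕ) := lt_of_lt_of_le hl hk
            rw [ut_apply r (Fin.lt_def.mpr hlk), mul_zero]
        rw [h1, zero_mul]
      · have hjl : (j : ℕ) < (l : ℕ) + (m + 1) := by omega
        rw [ih l j hjl, mul_zero]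
  refine ⟨n, Subtype.ext ?_⟩
  ext i j
  have hj := j.isLt
  simpa using main n i j (by omega)

/-- If `R` is an Armendariz ring, then for every positive integer `n` the upper triangular
matrix ring `T_n(R)` is almost Armendariz. -/
theorem upperTriangular_almostArmendariz_of_armendariz {R : Type*} [Ring R]
    (hR : IsArmendariz R) :
    ∀ n : ℕ, 0 < n → IsAlmostArmendariz (upperTriangularSubring R n) := by
  intro n hn f g hfg i j
  show IsStronglyNilpotent _
  apply stronglyNilpotent_of_diag_zero
  intro k
  have h1 : (f.map (diagHom n k)) * (g.map (diagHom n k)) = 0 := by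
    rw [← Polynomial.map_mul, hfg, Polynomial.map_zero]
  have h2 := hR _ _ h1 i j
  rw [Polynomial.coeff_map, Polynomial.coeff_map] at h2
  have h3 : ((f.coeff i * g.coeff j : upperTriangularSubring R n) :
      Matrix (Fin n) (Fin n) R) k k = diagHom n k (f.coeff i * g.coeff j) := rfl
  rw [h3, map_mul]
  exact h2
end

section
/- A ring R is almost Armendariz if and only if the Laurent polynomial ring R[x, x⁻¹] is almost Armendariz. -/
section PrimeIdeals

variable {R : Type*} [Ring R]

/-- A (set-theoretic) two-sided ideal. -/
def IsIdealSet (I : Set R) : Prop :=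
  (0 : R) ∈ I ∧ (∀ a b : R, a ∈ I → b ∈ I → a + b ∈ I) ∧
    (∀ a r : R, a ∈ I → r * a ∈ I) ∧ (∀ a r : R, a ∈ I → a * r ∈ I)

/-- A (set-theoretic) prime two-sided ideal. -/
def IsPrimeSet (I : Set R) : Prop :=
  IsIdealSet I ∧ ∀ a b : R, (∀ r : R, a * r * b ∈ I) → a ∈ I ∨ b ∈ I

theorem mem_prime_of_isStronglyNilpotent {a : R} (ha : IsStronglyNilpotent a)
    {I : Set R} (hI : IsPrimeSet I) : a ∈ I := by
  by_contra hnot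
  have key : ∀ x : R, x ∉ I → ∃ r : R, x * r * x ∉ I := by
    intro x hx
    by_contra hc
    push_neg at hc
    rcases hI.2 x x hc with h | h <;> exact hx h
  let t : ℕ → {x : R // x ∉ I} := fun n =>
    Nat.rec ⟨a, hnot⟩
      (fun _ p => ⟨p.1 * Classical.choose (key p.1 p.2) * p.1,
        Classical.choose_spec (key p.1 p.2)⟩) n
  obtain ⟨n, hn⟩ := ha (fun n => (t n).1) rfl
    (fun n => ⟨Classical.choose (key (t n).1 (t n).2), rfl⟩)
  exact (t n).2 (hn ▸ hI.1.1)

/-- The ideal generated by `I ∪ {z}` when `I` is an ideal. -/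
private def idealAdj (I : Set R) (z : R) : Set R :=
  {w | ∃ u ∈ I, ∃ v ∈ AddSubmonoid.closure {q : R | ∃ p p' : R, q = p * z * p'}, w = u + v}

private theorem subset_idealAdj {I : Set R} (_hI : IsIdealSet I) (z : R) : I ⊆ idealAdj I z :=
  fun u hu => ⟨u, hu, 0, (AddSubmonoid.closure _).zero_mem, (add_zero u).symm⟩

private theorem mem_idealAdj_self {I : Set R} (hI : IsIdealSet I) (z : R) : z ∈ idealAdj I z := by
  refine ⟨0, hI.1, z, ?_, (zero_add z).symm⟩
  have : (1 : R) * z * 1 ∈ {q : R | ∃ p p' : R, q = p * z * p'} := ⟨1, 1, rfl⟩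
  simpa using AddSubmonoid.subset_closure this

private theorem isIdealSet_idealAdj {I : Set R} (hI : IsIdealSet I) (z : R) :
    IsIdealSet (idealAdj I z) := by
  obtain ⟨h0, hadd, hleft, hright⟩ := hI
  refine ⟨⟨0, h0, 0, (AddSubmonoid.closure _).zero_mem, (add_zero 0).symm⟩, ?_, ?_, ?_⟩
  · rintro _ _ ⟨u1, hu1, v1, hv1, rfl⟩ ⟨u2, hu2, v2, hv2, rfl⟩
    exact ⟨u1 + u2, hadd _ _ hu1 hu2, v1 + v2, (AddSubmonoid.closure _).add_mem hv1 hv2,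
      (add_add_add_comm u1 v1 u2 v2)⟩
  · rintro _ r ⟨u, hu, v, hv, rfl⟩
    refine ⟨r * u, hleft _ _ hu, r * v, ?_, mul_add r u v⟩
    induction hv using AddSubmonoid.closure_induction with
    | mem x hx =>
      obtain ⟨p, p', rfl⟩ := hx
      exact AddSubmonoid.subset_closure ⟨r * p, p', by rw [mul_assoc, mul_assoc, mul_assoc]⟩
    | zero => simpa using (AddSubmonoid.closure _).zero_mem
    | add x y hx hy ihx ihy => simpa [mul_add] using (AddSubmonoid.closure _).add_mem ihx ihy
  · rintro _ r ⟨u, hu, v, hv, rfl⟩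
    refine ⟨u * r, hright _ _ hu, v * r, ?_, add_mul u v r⟩
    induction hv using AddSubmonoid.closure_induction with
    | mem x hx =>
      obtain ⟨p, p', rfl⟩ := hx
      exact AddSubmonoid.subset_closure ⟨p, p' * r, by rw [mul_assoc, mul_assoc]⟩
    | zero => simpa using (AddSubmonoid.closure _).zero_mem
    | add x y hx hy ihx ihy => simpa [add_mul] using (AddSubmonoid.closure _).add_mem ihx ihy

theorem isStronglyNilpotent_of_forall_prime {a : R}
    (h : ∀ I : Set R, IsPrimeSet I → a ∈ I) : IsStronglyNilpotent a := by
  by_contra hnot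
  unfold IsStronglyNilpotent at hnot
  push_neg at hnot
  obtain ⟨s, hs0, hstep, hne⟩ := hnot
  -- Zorn's lemma: an ideal maximal among ideals avoiding all `s n`.
  set 𝒮 : Set (Set R) := {I : Set R | IsIdealSet I ∧ ∀ n : ℕ, s n ∉ I} with h𝒮
  have hzorn : ∃ m, ({(0 : R)} : Set R) ⊆ m ∧ Maximal (· ∈ 𝒮) m := by
    refine zorn_subset_nonempty 𝒮 ?_ {(0 : R)} ?_
    · rintro c hc hchain ⟨I₀, hI₀⟩
      refine ⟨⋃₀ c, ⟨⟨?_, ?_, ?_, ?_⟩, ?_⟩, fun J hJ => Set.subset_sUnion_of_mem hJ⟩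
      · exact Set.mem_sUnion.2 ⟨I₀, hI₀, (hc hI₀).1.1⟩
      · rintro x y ⟨I, hI, hxI⟩ ⟨J, hJ, hyJ⟩
        rcases hchain.total hI hJ with hIJ | hJI
        · exact ⟨J, hJ, (hc hJ).1.2.1 _ _ (hIJ hxI) hyJ⟩
        · exact ⟨I, hI, (hc hI).1.2.1 _ _ hxI (hJI hyJ)⟩
      · rintro x r ⟨I, hI, hxI⟩
        exact ⟨I, hI, (hc hI).1.2.2.1 _ _ hxI⟩
      · rintro x r ⟨I, hI, hxI⟩
        exact ⟨I, hI, (hc hI).1.2.2.2 _ _ hxI⟩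
      · rintro n ⟨I, hI, hsI⟩
        exact (hc hI).2 n hsI
    · refine ⟨⟨rfl, ?_, ?_, ?_⟩, fun n hn => hne n hn⟩
      · rintro x y rfl rfl; simp
      · rintro x r rfl; simp
      · rintro x r rfl; simp
  obtain ⟨I₀, -, hmax⟩ := hzorn
  have hI₀ : IsIdealSet I₀ := hmax.1.1
  have hdisj : ∀ n, s n ∉ I₀ := hmax.1.2
  -- if `s m ∈ K` for an ideal `K`, then `s (m + k) ∈ K`
  have hmono : ∀ K : Set R, IsIdealSet K → ∀ m, s m ∈ K → ∀ k, s (m + k) ∈ K := by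
    intro K hK m hm k
    induction k with
    | zero => exact hm
    | succ k ih =>
      obtain ⟨r, hr⟩ := hstep (m + k)
      rw [← Nat.add_assoc, hr]
      exact hK.2.2.2 _ _ (hK.2.2.2 _ _ ih)
  -- for `z ∉ I₀`, the ideal `idealAdj I₀ z` meets the sequence
  have hmeet : ∀ z : R, z ∉ I₀ → ∃ m, s m ∈ idealAdj I₀ z := by
    intro z hz
    by_contra hc
    push_neg at hc
    have hJ : idealAdj I₀ z ∈ 𝒮 := ⟨isIdealSet_idealAdj hI₀ z, hc⟩
    exact hz (hmax.2 hJ (subset_idealAdj hI₀ z) (mem_idealAdj_self hI₀ z))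
  -- `I₀` is prime
  have hprime : IsPrimeSet I₀ := by
    refine ⟨hI₀, fun x y hxy => ?_⟩
    by_contra hc
    push_neg at hc
    obtain ⟨hx, hy⟩ := hc
    obtain ⟨m, hm⟩ := hmeet x hx
    obtain ⟨n, hn⟩ := hmeet y hy
    have hkx : s (m + n) ∈ idealAdj I₀ x := hmono _ (isIdealSet_idealAdj hI₀ x) m hm n
    have hky : s (m + n) ∈ idealAdj I₀ y := by
      rw [Nat.add_comm]
      exact hmono _ (isIdealSet_idealAdj hI₀ y) n hn m
    obtain ⟨r, hr⟩ := hstep (m + n)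
    obtain ⟨u1, hu1, v1, hv1, he1⟩ := hkx
    obtain ⟨u2, hu2, v2, hv2, he2⟩ := hky
    have hrmul : ∀ w, w ∈ AddSubmonoid.closure {q : R | ∃ p p' : R, q = p * y * p'} →
        r * w ∈ AddSubmonoid.closure {q : R | ∃ p p' : R, q = p * y * p'} := by
      intro w hw
      induction hw using AddSubmonoid.closure_induction with
      | mem w' hw' =>
        obtain ⟨p, p', rfl⟩ := hw'
        exact AddSubmonoid.subset_closure ⟨r * p, p', by rw [mul_assoc, mul_assoc, mul_assoc]⟩
      | zero => simpa using (AddSubmonoid.closure _).zero_mem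
      | add w' w'' _ _ ih1 ih2 => simpa [mul_add] using (AddSubmonoid.closure _).add_mem ih1 ih2
    have hvv : ∀ w1 ∈ AddSubmonoid.closure {q : R | ∃ p p' : R, q = p * x * p'},
        ∀ w2 ∈ AddSubmonoid.closure {q : R | ∃ p p' : R, q = p * y * p'}, w1 * w2 ∈ I₀ := by
      intro w1 hw1
      induction hw1 using AddSubmonoid.closure_induction with
      | mem w hw =>
        intro w2 hw2
        induction hw2 using AddSubmonoid.closure_induction with
        | mem w' hw' =>
          obtain ⟨p, p', rfl⟩ := hw
          obtain ⟨q, q', rfl⟩ := hw'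
          have : p * x * p' * (q * y * q') = p * (x * (p' * q) * y) * q' := by noncomm_ring
          rw [this]
          exact hI₀.2.2.2 _ _ (hI₀.2.2.1 _ _ (hxy (p' * q)))
        | zero => simpa using hI₀.1
        | add w' w'' _ _ ih1 ih2 => simpa [mul_add] using hI₀.2.1 _ _ ih1 ih2
      | zero => intro w2 _; simpa using hI₀.1
      | add w w' _ _ ih1 ih2 =>
        intro w2 hw2
        simpa [add_mul] using hI₀.2.1 _ _ (ih1 w2 hw2) (ih2 w2 hw2)
    have hprod : s (m + n) * r * s (m + n) ∈ I₀ := by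
      have hsplit : s (m + n) * r * s (m + n) = (u1 + v1) * r * (u2 + v2) := by
        rw [← he1, ← he2]
      have expand : (u1 + v1) * r * (u2 + v2) =
          (u1 * r * u2 + u1 * r * v2 + v1 * r * u2) + v1 * (r * v2) := by noncomm_ring
      rw [hsplit, expand]
      refine hI₀.2.1 _ _ (hI₀.2.1 _ _ (hI₀.2.1 _ _ ?_ ?_) ?_) ?_
      · exact hI₀.2.2.2 _ _ (hI₀.2.2.2 _ _ hu1)
      · exact hI₀.2.2.2 _ _ (hI₀.2.2.2 _ _ hu1)
      · exact hI₀.2.2.1 _ _ hu2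
      · exact hvv v1 hv1 (r * v2) (hrmul v2 hv2)
    rw [← hr] at hprod
    exact hdisj (m + n + 1) hprod
  exact hdisj 0 (hs0 ▸ h I₀ hprime)

theorem mem_primeRadical_iff {a : R} :
    a ∈ primeRadical R ↔ ∀ I : Set R, IsPrimeSet I → a ∈ I :=
  ⟨fun h _ hI => mem_prime_of_isStronglyNilpotent h hI,
   isStronglyNilpotent_of_forall_prime⟩

theorem zero_mem_primeRadical : (0 : R) ∈ primeRadical R :=
  fun _ h0 _ => ⟨0, h0⟩

theorem sum_mem_primeRadical {ι : Type*} {t : Finset ι} {f : ι → R}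
    (h : ∀ i ∈ t, f i ∈ primeRadical R) : (∑ i ∈ t, f i) ∈ primeRadical R := by
  rw [mem_primeRadical_iff]
  intro I hI
  refine Finset.sum_induction f (· ∈ I) (fun a b ha hb => hI.1.2.1 a b ha hb) hI.1.1 ?_
  intro i hi
  exact mem_prime_of_isStronglyNilpotent (h i hi) hI

end PrimeIdeals

section Laurent

open Polynomial LaurentPolynomial

variable {R : Type*} [Ring R]

theorem contraction_prime {Q : Set (LaurentPolynomial R)} (hQ : IsPrimeSet Q) :
    IsPrimeSet {a : R | (LaurentPolynomial.C a : LaurentPolynomial R) ∈ Q} := by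
  constructor
  · refine ⟨by simpa using hQ.1.1, ?_, ?_, ?_⟩
    · intro a b ha hb
      simpa [map_add] using hQ.1.2.1 _ _ ha hb
    · intro a r ha
      simpa [map_mul] using hQ.1.2.2.1 _ (LaurentPolynomial.C r) ha
    · intro a r ha
      simpa [map_mul] using hQ.1.2.2.2 _ (LaurentPolynomial.C r) ha
  · intro x y hxy
    have key : ∀ q : LaurentPolynomial R,
        LaurentPolynomial.C x * q * LaurentPolynomial.C y ∈ Q := by
      intro q
      induction q using LaurentPolynomial.induction_on' with
      | add p q ihp ihq => simpa [mul_add, add_mul] using hQ.1.2.1 _ _ ihp ihq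
      | C_mul_T n a =>
        have : LaurentPolynomial.C x * (LaurentPolynomial.C a * T n) * LaurentPolynomial.C y =
            LaurentPolynomial.C (x * a * y) * T n := by
          rw [map_mul, map_mul, mul_assoc (LaurentPolynomial.C x), mul_assoc,
            (commute_T n (LaurentPolynomial.C y)).eq, ← mul_assoc, ← mul_assoc]
        rw [this]
        exact hQ.1.2.2.2 _ _ (hxy a)
    exact hQ.2 _ _ fun q => key q

theorem toLaurent_mul_T_mem_primeRadical {p : Polynomial R}
    (hp : ∀ n : ℕ, p.coeff n ∈ primeRadical R) (m : ℤ) :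
    (Polynomial.toLaurent p * T m : LaurentPolynomial R) ∈
      primeRadical (LaurentPolynomial R) := by
  rw [mem_primeRadical_iff]
  intro Q hQ
  have hps : Polynomial.toLaurent p ∈ Q := by
    have hrep : (Polynomial.toLaurent p : LaurentPolynomial R) =
        ∑ n ∈ p.support, LaurentPolynomial.C (p.coeff n) * T n := by
      conv_lhs => rw [← Polynomial.sum_monomial_eq p]
      rw [Polynomial.sum, map_sum]
      exact Finset.sum_congr rfl fun n _ => Polynomial.toLaurent_C_mul_T n (p.coeff n)
    rw [hrep]
    refine Finset.sum_induction _ (· ∈ Q) (fun a b ha hb => hQ.1.2.1 a b ha hb) hQ.1.1 ?_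
    intro n _
    have hcn : (LaurentPolynomial.C (p.coeff n) : LaurentPolynomial R) ∈ Q :=
      mem_prime_of_isStronglyNilpotent (hp n) (contraction_prime hQ)
    exact hQ.1.2.2.2 _ _ hcn
  exact hQ.1.2.2.2 _ _ hps

theorem isStronglyNilpotent_of_C {a : R}
    (h : IsStronglyNilpotent (LaurentPolynomial.C a : LaurentPolynomial R)) :
    IsStronglyNilpotent a := by
  intro s hs0 hstep
  obtain ⟨n, hn⟩ := h (fun n => LaurentPolynomial.C (s n)) (congrArg LaurentPolynomial.C hs0)
    (fun n => by
      obtain ⟨r, hr⟩ := hstep n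
      exact ⟨LaurentPolynomial.C r, by rw [hr, map_mul, map_mul]⟩)
  refine ⟨n, ?_⟩
  have : Polynomial.toLaurent (Polynomial.C (s n)) = Polynomial.toLaurent (0 : Polynomial R) := by
    rw [Polynomial.toLaurent_C, map_zero, hn]
  have h2 := Polynomial.toLaurent_injective this
  rwa [Polynomial.C_eq_zero] at h2

/-- Clearing denominators: every polynomial over Laurent polynomials is, coefficientwise,
`T N` times a polynomial over polynomials. -/
theorem exists_clear_denominators (F : Polynomial (LaurentPolynomial R)) :
    ∃ (N : ℕ) (F₂ : Polynomial (Polynomial R)),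
      ∀ i : ℕ, Polynomial.toLaurent (F₂.coeff i) = F.coeff i * T (N : ℤ) := by
  induction F using Polynomial.induction_on' with
  | monomial n f =>
    obtain ⟨N, f', hf'⟩ := LaurentPolynomial.exists_T_pow f
    refine ⟨N, Polynomial.monomial n f', fun i => ?_⟩
    rw [Polynomial.coeff_monomial, Polynomial.coeff_monomial]
    by_cases h : n = i
    · simp [h, hf']
    · simp [h]
  | add p q ihp ihq =>
    obtain ⟨N₁, P₂, h₁⟩ := ihp
    obtain ⟨N₂, Q₂, h₂⟩ := ihq
    refine ⟨N₁ + N₂, P₂ * Polynomial.C (Polynomial.X ^ N₂) +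
      Q₂ * Polynomial.C (Polynomial.X ^ N₁), fun i => ?_⟩
    rw [Polynomial.coeff_add, Polynomial.coeff_mul_C, Polynomial.coeff_mul_C, map_add,
      map_mul, map_mul, Polynomial.toLaurent_X_pow, Polynomial.toLaurent_X_pow, h₁, h₂,
      Polynomial.coeff_add, add_mul]
    push_cast
    rw [T_add, mul_assoc, mul_assoc, (commute_T (N₂ : ℤ) (T (N₁ : ℤ))).eq]

/-- The substitution `y ↦ X^k` picks out coefficients. -/
theorem eval₂_X_pow_coeff (A : Polynomial (Polynomial R)) (k : ℕ)
    (hk : ∀ i : ℕ, (A.coeff i).natDegree < k) (i s : ℕ) (hs : s < k) :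
    (Polynomial.eval₂ (RingHom.id (Polynomial R)) (Polynomial.X ^ k) A).coeff (k * i + s) =
      (A.coeff i).coeff s := by
  rw [Polynomial.eval₂_eq_sum, Polynomial.sum]
  simp only [RingHom.id_apply, ← pow_mul]
  rw [Polynomial.finset_sum_coeff]
  have hterm : ∀ i' : ℕ, i' ≠ i →
      (A.coeff i' * Polynomial.X ^ (k * i')).coeff (k * i + s) = 0 := by
    intro i' hne
    rw [Polynomial.coeff_mul_X_pow']
    rcases lt_or_gt_of_ne hne with hlt | hgt
    · have h1 : k * (i' + 1) ≤ k * i := Nat.mul_le_mul_left k hlt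
      rw [Nat.mul_add, Nat.mul_one] at h1
      have hle : k * i' ≤ k * i + s := by omega
      rw [if_pos hle]
      apply Polynomial.coeff_eq_zero_of_natDegree_lt
      have := hk i'
      omega
    · have h1 : k * (i + 1) ≤ k * i' := Nat.mul_le_mul_left k hgt
      rw [Nat.mul_add, Nat.mul_one] at h1
      rw [if_neg (by omega)]
  by_cases hi : i ∈ A.support
  · rw [Finset.sum_eq_single_of_mem i hi (fun i' _ hne => hterm i' hne),
      Polynomial.coeff_mul_X_pow', if_pos (Nat.le_add_right _ _), Nat.add_sub_cancel_left]
  · rw [Finset.sum_eq_zero fun i' hi' => hterm i' (fun h => hi (h ▸ hi')),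
      Polynomial.notMem_support_iff.mp hi, Polynomial.coeff_zero]

end Laurent

/-- A ring `R` is almost Armendariz if and only if the Laurent polynomial ring `R[x, x⁻¹]`
is almost Armendariz. -/
theorem almostArmendariz_iff_laurent {R : Type*} [Ring R] :
    IsAlmostArmendariz R ↔ IsAlmostArmendariz (LaurentPolynomial R) := by
  open Polynomial LaurentPolynomial in
  constructor
  · -- hard direction
    intro hR F G hFG i j
    obtain ⟨N₁, F₂, hF₂⟩ := exists_clear_denominators F
    obtain ⟨N₂, G₂, hG₂⟩ := exists_clear_denominators G
    -- the coefficientwise map toLaurent, as mapping of polynomials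
    have hmapF : F₂.map (Polynomial.toLaurent) = F * Polynomial.C (T (N₁ : ℤ)) := by
      ext n
      rw [Polynomial.coeff_map, Polynomial.coeff_mul_C, hF₂]
    have hmapG : G₂.map (Polynomial.toLaurent) = G * Polynomial.C (T (N₂ : ℤ)) := by
      ext n
      rw [Polynomial.coeff_map, Polynomial.coeff_mul_C, hG₂]
    have hCT_comm : ∀ (m : ℤ) (H : Polynomial (LaurentPolynomial R)),
        Polynomial.C (T m) * H = H * Polynomial.C (T m) := by
      intro m H
      ext n
      rw [Polynomial.coeff_C_mul, Polynomial.coeff_mul_C, (commute_T m _).eq]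
    have hFG₂ : F₂ * G₂ = 0 := by
      apply Polynomial.map_injective (Polynomial.toLaurent) Polynomial.toLaurent_injective
      rw [Polynomial.map_mul, hmapF, hmapG, Polynomial.map_zero, mul_assoc,
        ← mul_assoc (Polynomial.C (T (N₁ : ℤ))), hCT_comm, mul_assoc, ← mul_assoc, ← mul_assoc,
        hFG, zero_mul, zero_mul]
    -- degree bound
    set k : ℕ := 1 + (F₂.support.sup fun i => (F₂.coeff i).natDegree) +
      (G₂.support.sup fun i => (G₂.coeff i).natDegree) with hk_def
    have hkF : ∀ i' : ℕ, (F₂.coeff i').natDegree < k := by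
      intro i'
      by_cases h : i' ∈ F₂.support
      · have h2 : (F₂.coeff i').natDegree ≤ F₂.support.sup fun i => (F₂.coeff i).natDegree := by
          have h2 := Finset.le_sup (f := fun i => (F₂.coeff i).natDegree) h
          exact h2
        omega
      · rw [Polynomial.notMem_support_iff.mp h]
        simp only [Polynomial.natDegree_zero]
        omega
    have hkG : ∀ i' : ℕ, (G₂.coeff i').natDegree < k := by
      intro i'
      by_cases h : i' ∈ G₂.support
      · have h2 : (G₂.coeff i').natDegree ≤ G₂.support.sup fun i => (G₂.coeff i).natDegree := by
          have h2 := Finset.le_sup (f := fun i => (G₂.coeff i).natDegree) h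
          exact h2
        omega
      · rw [Polynomial.notMem_support_iff.mp h]
        simp only [Polynomial.natDegree_zero]
        omega
    -- substitution y ↦ X^k
    set e : Polynomial (Polynomial R) →+* Polynomial R :=
      Polynomial.eval₂RingHom' (RingHom.id (Polynomial R)) (Polynomial.X ^ k)
        (fun a => ((Polynomial.commute_X a).symm.pow_right k)) with he_def
    have heval : e F₂ * e G₂ = 0 := by
      rw [← map_mul, hFG₂, map_zero]
    have hPQ := hR (e F₂) (e G₂) heval
    -- coefficient products are in the prime radical
    have hcoeff : ∀ s t : ℕ,
        (F₂.coeff i).coeff s * (G₂.coeff j).coeff t ∈ primeRadical R := by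
      intro s t
      by_cases hs : s < k
      · by_cases ht : t < k
        · have h1 : (F₂.coeff i).coeff s = (e F₂).coeff (k * i + s) :=
            (eval₂_X_pow_coeff F₂ k hkF i s hs).symm
          have h2 : (G₂.coeff j).coeff t = (e G₂).coeff (k * j + t) :=
            (eval₂_X_pow_coeff G₂ k hkG j t ht).symm
          rw [h1, h2]
          exact hPQ (k * i + s) (k * j + t)
        · rw [Polynomial.coeff_eq_zero_of_natDegree_lt (lt_of_lt_of_le (hkG j) (not_lt.mp ht)),
            mul_zero]
          exact zero_mem_primeRadical
      · rw [Polynomial.coeff_eq_zero_of_natDegree_lt (lt_of_lt_of_le (hkF i) (not_lt.mp hs)),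
          zero_mul]
        exact zero_mem_primeRadical
    have hprodcoeff : ∀ n : ℕ, ((F₂.coeff i) * (G₂.coeff j)).coeff n ∈ primeRadical R := by
      intro n
      rw [Polynomial.coeff_mul]
      exact sum_mem_primeRadical fun p _ => hcoeff p.1 p.2
    -- relate back to F.coeff i * G.coeff j
    have hrel : F.coeff i * G.coeff j =
        Polynomial.toLaurent (F₂.coeff i * G₂.coeff j) * T (-(N₁ + N₂ : ℤ)) := by
      rw [map_mul, hF₂, hG₂, mul_assoc (F.coeff i), ← mul_assoc (T (N₁ : ℤ)),
        (commute_T (N₁ : ℤ) (G.coeff j)).eq, mul_assoc (G.coeff j), ← T_add, mul_assoc,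
        mul_assoc (G.coeff j), ← T_add, add_neg_cancel, T_zero, mul_one]
    rw [hrel]
    exact toLaurent_mul_T_mem_primeRadical hprodcoeff _
  · -- easy direction
    intro hL f g hfg i j
    have h := hL (f.map (LaurentPolynomial.C : R →+* LaurentPolynomial R))
      (g.map (LaurentPolynomial.C : R →+* LaurentPolynomial R))
      (by rw [← Polynomial.map_mul, hfg, Polynomial.map_zero]) i j
    rw [Polynomial.coeff_map, Polynomial.coeff_map, ← map_mul] at h
    exact isStronglyNilpotent_of_C h
end
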